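/- Let Y_i(t), i = 1,…,N, be Gaussian random vectors in ℝ^d indexed by t, with common covariance Σ(t) (homogeneous mobility) diagonalized as PᵀΣ^{−1}P = diag(1/σ₁(t)²,…,1/σ_d(t)²), and transformed means η^{(i)}(t) = Pᵀμ_i(t). Suppose for every a and all i, j, lim_{t→∞} η_a^{(i)}(t)/σ_a(t) and lim_{t→∞} η_a^{(j)}(t)/σ_a(t) exist and are equal. Then for every bounded continuous radial function ν, lim_{t→∞} (E[ν(‖Y_i(t)‖)] − E[ν(‖Y_j(t)‖)]) = 0. -/

import Mathlib

open MeasureTheory Real Filter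


/-- Gaussian density with mean `m` and standard deviation `s`. -/
noncomputable def gaussDen (m s : ℝ) : ℝ → ℝ :=
  fun z => 1 / (Real.sqrt (2 * π) * s) * Real.exp (-(z - m) ^ 2 / (2 * s ^ 2))

lemma gaussDen_nonneg (m s : ℝ) (hs : 0 < s) (z : ℝ) : 0 ≤ gaussDen m s z := by
  unfold gaussDen; positivity

lemma gaussDen_continuous (m s : ℝ) : Continuous (gaussDen m s) := by
  unfold gaussDen; fun_prop

lemma gaussDen_eq (m s : ℝ) (hs : 0 < s) :
    gaussDen m s = fun z => 1 / (Real.sqrt (2 * π) * s) *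
      Real.exp (-(1/(2*s^2)) * (z - m) ^ 2) := by
  funext z
  unfold gaussDen
  rw [show -(z - m)^2/(2*s^2) = -(1/(2*s^2)) * (z - m)^2 by field_simp]

lemma gaussDen_integrable (m s : ℝ) (hs : 0 < s) : Integrable (gaussDen m s) := by
  rw [gaussDen_eq m s hs]
  have hb : (0:ℝ) < 1/(2*s^2) := by positivity
  exact ((integrable_exp_neg_mul_sq hb).comp_sub_right m).const_mul _

lemma gaussDen_integral (m s : ℝ) (hs : 0 < s) : ∫ z, gaussDen m s z = 1 := by
  rw [gaussDen_eq m s hs]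
  have hb : (0:ℝ) < 1/(2*s^2) := by positivity
  rw [MeasureTheory.integral_const_mul]
  rw [integral_sub_right_eq_self (fun z => Real.exp (-(1/(2*s^2)) * z ^ 2)) m]
  rw [integral_gaussian]
  have h2π : (0:ℝ) < Real.sqrt (2*π) := Real.sqrt_pos.2 (by positivity)
  have h1 : Real.sqrt (π / (1/(2*s^2))) = Real.sqrt (2*π) * s := by
    rw [show π / (1/(2*s^2)) = (2*π) * s^2 by field_simp]
    rw [Real.sqrt_mul (by positivity) (s^2), Real.sqrt_sq hs.le]
  rw [h1]
  field_simp


lemma std_L1_tendsto (u v : ℝ → ℝ) (L : ℝ)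
    (hu : Tendsto u atTop (nhds L)) (hv : Tendsto v atTop (nhds L)) :
    Tendsto (fun t => ∫ w : ℝ,
        |Real.exp (-(w - u t) ^ 2 / 2) - Real.exp (-(w - v t) ^ 2 / 2)|)
      atTop (nhds 0) := by
  have key : ∀ (x w : ℝ), |x - L| ≤ 1 →
      Real.exp (-(w - x) ^ 2 / 2) ≤ Real.exp (1/2) * Real.exp (-(1/4) * (w - L) ^ 2) := by
    intro x w hx
    rw [← Real.exp_add]
    apply Real.exp_le_exp.2
    obtain ⟨h1, h2⟩ := abs_le.mp hx
    nlinarith [sq_nonneg ((w - x) - (x - L)), sq_nonneg (w - x + (x - L))]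
  have h0 : (0:ℝ) = ∫ (_ : ℝ), (0:ℝ) := by simp
  rw [h0]
  apply tendsto_integral_filter_of_dominated_convergence
    (fun w => 2 * Real.exp (1/2) * Real.exp (-(1/4) * (w - L) ^ 2))
  · filter_upwards with t
    apply Continuous.aestronglyMeasurable
    fun_prop
  · have h1 : ∀ᶠ t in atTop, |u t - L| ≤ 1 := by
      filter_upwards [Metric.tendsto_nhds.mp hu 1 one_pos] with t ht
      rw [Real.dist_eq] at ht; exact ht.le
    have h2 : ∀ᶠ t in atTop, |v t - L| ≤ 1 := by
      filter_upwards [Metric.tendsto_nhds.mp hv 1 one_pos] with t ht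
      rw [Real.dist_eq] at ht; exact ht.le
    filter_upwards [h1, h2] with t ht1 ht2
    filter_upwards with w
    rw [Real.norm_eq_abs, abs_abs]
    calc |Real.exp (-(w - u t) ^ 2 / 2) - Real.exp (-(w - v t) ^ 2 / 2)|
        ≤ Real.exp (-(w - u t) ^ 2 / 2) + Real.exp (-(w - v t) ^ 2 / 2) := by
          refine (abs_sub _ _).trans ?_
          rw [abs_of_nonneg (Real.exp_pos _).le, abs_of_nonneg (Real.exp_pos _).le]
      _ ≤ 2 * Real.exp (1/2) * Real.exp (-(1/4) * (w - L) ^ 2) := by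
          have := key (u t) w ht1
          have := key (v t) w ht2
          linarith
  · exact (((integrable_exp_neg_mul_sq (by norm_num : (0:ℝ) < 1/4)).comp_sub_right
      L).const_mul (2 * Real.exp (1/2)))
  · filter_upwards with w
    have hc : Continuous fun x : ℝ => Real.exp (-(w - x) ^ 2 / 2) := by fun_prop
    have := (((hc.tendsto L).comp hu).sub ((hc.tendsto L).comp hv)).abs
    simpa using this



lemma gaussDen_L1_eq (m1 m2 s : ℝ) (hs : 0 < s) :
    ∫ z, |gaussDen m1 s z - gaussDen m2 s z| =
      (1 / Real.sqrt (2*π)) * ∫ w : ℝ,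
        |Real.exp (-(w - m1/s)^2/2) - Real.exp (-(w - m2/s)^2/2)| := by
  have h2π : (0:ℝ) < Real.sqrt (2*π) := Real.sqrt_pos.2 (by positivity)
  have hc : (0:ℝ) < 1 / (Real.sqrt (2*π) * s) := by positivity
  have hptw : ∀ x : ℝ, |gaussDen m1 s (s*x) - gaussDen m2 s (s*x)| =
      1 / (Real.sqrt (2*π) * s) *
        |Real.exp (-(x - m1/s)^2/2) - Real.exp (-(x - m2/s)^2/2)| := by
    intro x
    have he : ∀ m : ℝ, -(s*x - m)^2/(2*s^2) = -(x - m/s)^2/2 := by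
      intro m; field_simp
    unfold gaussDen
    rw [he, he, ← mul_sub, abs_mul, abs_of_pos hc]
  have h := MeasureTheory.Measure.integral_comp_mul_left
    (fun z => |gaussDen m1 s z - gaussDen m2 s z|) s
  simp only [hptw, smul_eq_mul] at h
  rw [MeasureTheory.integral_const_mul, abs_of_pos (inv_pos.2 hs)] at h
  have := congrArg (fun x => s * x) h
  simp only [← mul_assoc, mul_inv_cancel₀ hs.ne', one_mul] at this
  rw [← this, show s * (1 / (Real.sqrt (2*π) * s)) = 1 / Real.sqrt (2*π) by field_simp]

lemma abs_prod_sub_prod_le {ι : Type*} [DecidableEq ι] (s : Finset ι) (f g : ι → ℝ)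
    (hf : ∀ a, 0 ≤ f a) (hg : ∀ a, 0 ≤ g a) :
    |∏ a ∈ s, f a - ∏ a ∈ s, g a| ≤
      ∑ a ∈ s, |f a - g a| * ∏ b ∈ s.erase a, max (f b) (g b) := by
  classical
  induction s using Finset.induction_on with
  | empty => simp
  | @insert a s' ha ih =>
    rw [Finset.prod_insert ha, Finset.prod_insert ha, Finset.sum_insert ha,
      Finset.erase_insert ha]
    have key : f a * ∏ b ∈ s', f b - g a * ∏ b ∈ s', g b
        = (f a - g a) * ∏ b ∈ s', f b + g a * (∏ b ∈ s', f b - ∏ b ∈ s', g b) := by ring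
    rw [key]
    refine (abs_add_le _ _).trans ?_
    have t1 : |(f a - g a) * ∏ b ∈ s', f b| ≤ |f a - g a| * ∏ b ∈ s', max (f b) (g b) := by
      rw [abs_mul, abs_of_nonneg (Finset.prod_nonneg (fun b _ => hf b))]
      exact mul_le_mul_of_nonneg_left
        (Finset.prod_le_prod (fun b _ => hf b) (fun b _ => le_max_left _ _)) (abs_nonneg _)
    have t2 : |g a * (∏ b ∈ s', f b - ∏ b ∈ s', g b)| ≤
        max (f a) (g a) * ∑ b ∈ s', |f b - g b| * ∏ c ∈ s'.erase b, max (f c) (g c) := by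
      rw [abs_mul, abs_of_nonneg (hg a)]
      refine mul_le_mul (le_max_right _ _) ih (abs_nonneg _)
        (le_trans (hf a) (le_max_left _ _))
    have t3 : max (f a) (g a) * ∑ b ∈ s', |f b - g b| * ∏ c ∈ s'.erase b, max (f c) (g c)
        = ∑ b ∈ s', |f b - g b| * ∏ c ∈ (insert a s').erase b, max (f c) (g c) := by
      rw [Finset.mul_sum]
      refine Finset.sum_congr rfl (fun b hb => ?_)
      have hab : a ≠ b := fun h => ha (h ▸ hb)
      rw [Finset.erase_insert_of_ne hab, Finset.prod_insert
        (fun h => ha (Finset.mem_of_mem_erase h))]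
      ring
    calc _ ≤ _ := add_le_add t1 t2
      _ = _ := by rw [t3]

lemma euclidean_integral_transfer {d : ℕ} (g : (Fin d → ℝ) → ℝ) :
    ∫ z : EuclideanSpace ℝ (Fin d), g (fun a => z a) = ∫ w : Fin d → ℝ, g w := by
  have h := (EuclideanSpace.volume_preserving_symm_measurableEquiv_toLp (ι := Fin d)).integral_comp
    (MeasurableEquiv.measurableEmbedding _) g
  exact h

lemma euclidean_integrable_transfer {d : ℕ} (g : (Fin d → ℝ) → ℝ) (hg : Integrable g) :
    Integrable (fun z : EuclideanSpace ℝ (Fin d) => g (fun a => z a)) := by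
  exact ((EuclideanSpace.volume_preserving_symm_measurableEquiv_toLp (ι := Fin d)).integrable_comp_emb
    (MeasurableEquiv.measurableEmbedding _)).2 hg

/-- sufficiency direction of the Gaussian BPP approximation:
for Gaussian vectors `Y_i(t)` with common (diagonalized) covariance
`diag(σ₁(t)²,…,σ_d(t)²)` and transformed means `η^{(i)}(t)`, if the limits
`lim_{t→∞} η_a^{(i)}(t)/σ_a(t)` exist and agree for all `i`, then for every bounded
continuous radial function `ν`, `E[ν(‖Y_i(t)‖)] − E[ν(‖Y_j(t)‖)] → 0`. -/
theorem gaussian_bpp_approximation_sufficiency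
    {d N : ℕ} (η : Fin N → ℝ → Fin d → ℝ) (σ : ℝ → Fin d → ℝ)
    (hσ : ∀ t a, 0 < σ t a)
    -- the normalized means have common limits
    (hlim : ∃ L : Fin d → ℝ, ∀ i a,
      Tendsto (fun t => η i t a / σ t a) atTop (nhds (L a)))
    -- the Gaussian expectation of a radial function, in diagonalized coordinates
    (G : Fin N → (ℝ → ℝ) → ℝ → ℝ)
    (hG : ∀ i ν t, G i ν t =
      ∫ z : EuclideanSpace ℝ (Fin d), ν ‖z‖ *
        ∏ a, (1 / (Real.sqrt (2 * π) * σ t a)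
          * Real.exp (-(z a - η i t a) ^ 2 / (2 * (σ t a) ^ 2)))) :
    ∀ ν : ℝ → ℝ, Continuous ν → (∃ M, ∀ r, |ν r| ≤ M) →
      ∀ i j : Fin N, Tendsto (fun t => G i ν t - G j ν t) atTop (nhds 0) := by
  obtain ⟨L, hL⟩ := hlim
  rintro ν hν ⟨M, hM⟩ i j
  have hM0 : 0 ≤ M := le_trans (abs_nonneg _) (hM 0)
  -- rewrite G in terms of gaussDen
  have hGk : ∀ k t, G k ν t = ∫ z : EuclideanSpace ℝ (Fin d),
      ν ‖z‖ * ∏ a, gaussDen (η k t a) (σ t a) (z a) := by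
    intro k t; rw [hG]; rfl
  -- the L¹ distances in each coordinate
  set D : Fin d → ℝ → ℝ := fun a t =>
    ∫ z : ℝ, |gaussDen (η i t a) (σ t a) z - gaussDen (η j t a) (σ t a) z| with hD
  -- main bound
  have bound : ∀ t, |G i ν t - G j ν t| ≤ M * ∑ a, D a t * 2 ^ d := by
    intro t
    have hfint : ∀ (k : Fin N) a, Integrable (gaussDen (η k t a) (σ t a)) :=
      fun k a => gaussDen_integrable _ _ (hσ t a)
    have hfnn : ∀ (k : Fin N) a (z : ℝ), 0 ≤ gaussDen (η k t a) (σ t a) z :=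
      fun k a z => gaussDen_nonneg _ _ (hσ t a) z
    have hPint : ∀ k : Fin N, Integrable (fun w : Fin d → ℝ =>
        ∏ a, gaussDen (η k t a) (σ t a) (w a)) :=
      fun k => Integrable.fintype_prod (fun a => hfint k a)
    have hPEint : ∀ k : Fin N, Integrable (fun z : EuclideanSpace ℝ (Fin d) =>
        ∏ a, gaussDen (η k t a) (σ t a) (z a)) :=
      fun k => euclidean_integrable_transfer _ (hPint k)
    have hbd : ∃ C, ∀ z : EuclideanSpace ℝ (Fin d), ‖ν ‖z‖‖ ≤ C :=
      ⟨M, fun z => by rw [Real.norm_eq_abs]; exact hM _⟩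
    have hνmeas : AEStronglyMeasurable (fun z : EuclideanSpace ℝ (Fin d) => ν ‖z‖)
        (volume : Measure (EuclideanSpace ℝ (Fin d))) :=
      (hν.comp continuous_norm).aestronglyMeasurable
    have hint : ∀ k : Fin N, Integrable (fun z : EuclideanSpace ℝ (Fin d) =>
        ν ‖z‖ * ∏ a, gaussDen (η k t a) (σ t a) (z a)) :=
      fun k => (hPEint k).bdd_mul hνmeas (ae_of_all _ hbd.choose_spec)
    -- difference as an integral
    rw [hGk i t, hGk j t, ← integral_sub (hint i) (hint j)]
    simp only [← mul_sub]
    -- bound by M times the L¹ distance of the product densities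
    have step1 : |∫ z : EuclideanSpace ℝ (Fin d), ν ‖z‖ *
        (∏ a, gaussDen (η i t a) (σ t a) (z a) - ∏ a, gaussDen (η j t a) (σ t a) (z a))|
        ≤ M * ∫ z : EuclideanSpace ℝ (Fin d),
          |∏ a, gaussDen (η i t a) (σ t a) (z a) - ∏ a, gaussDen (η j t a) (σ t a) (z a)| := by
      have hsub : Integrable (fun z : EuclideanSpace ℝ (Fin d) => ν ‖z‖ *
          (∏ a, gaussDen (η i t a) (σ t a) (z a) - ∏ a, gaussDen (η j t a) (σ t a) (z a))) := by
        have := (hint i).sub (hint j)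
        simpa [mul_sub, Pi.sub_def] using this
      rw [← Real.norm_eq_abs, ← MeasureTheory.integral_const_mul]
      refine (norm_integral_le_integral_norm _).trans ?_
      refine integral_mono hsub.norm
        ((((hPEint i).sub (hPEint j)).abs).const_mul M) (fun z => ?_)
      rw [Real.norm_eq_abs, abs_mul]
      exact mul_le_mul_of_nonneg_right (hM _) (abs_nonneg _)
    refine step1.trans (mul_le_mul_of_nonneg_left ?_ hM0)
    -- transfer to the pi space
    rw [euclidean_integral_transfer (fun w => |∏ a, gaussDen (η i t a) (σ t a) (w a) -
      ∏ a, gaussDen (η j t a) (σ t a) (w a)|)]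
    -- telescoping bound
    classical
    set H : Fin d → Fin d → ℝ → ℝ := fun a b =>
      if b = a then fun z => |gaussDen (η i t a) (σ t a) z - gaussDen (η j t a) (σ t a) z|
      else fun z => max (gaussDen (η i t b) (σ t b) z) (gaussDen (η j t b) (σ t b) z) with hH
    have hHint : ∀ a b, Integrable (H a b) := by
      intro a b
      by_cases hba : b = a
      · simpa [hH, hba] using ((hfint i a).sub (hfint j a)).abs
      · have := (hfint i b).sup (hfint j b)
        simpa [hH, hba, Pi.sup_def] using this
    have hHnn : ∀ a b z, 0 ≤ H a b z := by
      intro a b z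
      by_cases hba : b = a
      · simp [hH, hba, abs_nonneg]
      · simp only [hH, if_neg hba]
        exact le_max_of_le_left (hfnn i b z)
    have step2 : ∫ w : Fin d → ℝ, |∏ a, gaussDen (η i t a) (σ t a) (w a) -
        ∏ a, gaussDen (η j t a) (σ t a) (w a)|
        ≤ ∑ a, ∫ w : Fin d → ℝ, ∏ b, H a b (w b) := by
      rw [← integral_finset_sum (μ := volume) _ (fun a _ => Integrable.fintype_prod (fun b => hHint a b))]
      refine integral_mono_of_nonneg (Filter.Eventually.of_forall (fun w => abs_nonneg _))
        (integrable_finset_sum _ (fun a _ => Integrable.fintype_prod (fun b => hHint a b)))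
        (Filter.Eventually.of_forall (fun w => ?_))
      refine (abs_prod_sub_prod_le Finset.univ _ _ (fun a => hfnn i a (w a))
        (fun a => hfnn j a (w a))).trans ?_
      refine Finset.sum_le_sum (fun a _ => ?_)
      rw [← Finset.mul_prod_erase Finset.univ (fun b => H a b (w b)) (Finset.mem_univ a)]
      have h1 : H a a (w a) = |gaussDen (η i t a) (σ t a) (w a) -
          gaussDen (η j t a) (σ t a) (w a)| := by simp [hH]
      have h2 : ∀ b ∈ Finset.univ.erase a, max (gaussDen (η i t b) (σ t b) (w b))
          (gaussDen (η j t b) (σ t b) (w b)) = H a b (w b) := by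
        intro b hb
        simp [hH, Finset.ne_of_mem_erase hb]
      rw [h1, Finset.prod_congr rfl h2]
    refine step2.trans (Finset.sum_le_sum (fun a _ => ?_))
    -- evaluate the product integral
    rw [MeasureTheory.integral_fintype_prod_volume_eq_prod (fun b => H a b)]
    rw [← Finset.mul_prod_erase Finset.univ (fun b => ∫ z, H a b z) (Finset.mem_univ a)]
    have h1 : (∫ z, H a a z) = D a t := by simp [hH, hD]
    rw [h1]
    refine mul_le_mul_of_nonneg_left ?_ ?_
    · -- product of the remaining integrals is at most 2 ^ d
      have hle2 : ∀ b ∈ Finset.univ.erase a, (∫ z, H a b z) ≤ 2 := by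
        intro b hb
        have hba : b ≠ a := Finset.ne_of_mem_erase hb
        have : (∫ z, H a b z) ≤ ∫ z, (gaussDen (η i t b) (σ t b) z +
            gaussDen (η j t b) (σ t b) z) := by
          refine integral_mono (hHint a b) ((hfint i b).add (hfint j b)) (fun z => ?_)
          simp only [hH, if_neg hba]
          exact max_le (le_add_of_nonneg_right (hfnn j b z))
            (le_add_of_nonneg_left (hfnn i b z))
        rw [integral_add (hfint i b) (hfint j b), gaussDen_integral _ _ (hσ t b),
          gaussDen_integral _ _ (hσ t b)] at this
        linarith
      calc ∏ b ∈ Finset.univ.erase a, ∫ z, H a b z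
          ≤ ∏ b ∈ Finset.univ.erase a, (2:ℝ) :=
            Finset.prod_le_prod (fun b _ => integral_nonneg (fun z => hHnn a b z)) hle2
        _ = 2 ^ (Finset.univ.erase a).card := by rw [Finset.prod_const]
        _ ≤ 2 ^ d := by
            refine pow_le_pow_right₀ one_le_two ?_
            exact le_trans (Finset.card_le_card (Finset.erase_subset _ _))
              (by simp [Finset.card_univ])
    · rw [← h1]; exact integral_nonneg (fun z => hHnn a a z)
  -- convergence of the bound
  have hDt : ∀ a, Tendsto (fun t => D a t) atTop (nhds 0) := by
    intro a
    have heq : ∀ t, D a t = (1 / Real.sqrt (2*π)) * ∫ w : ℝ,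
        |Real.exp (-(w - (η i t a)/(σ t a))^2/2) -
          Real.exp (-(w - (η j t a)/(σ t a))^2/2)| := by
      intro t; exact gaussDen_L1_eq _ _ _ (hσ t a)
    simp only [heq]
    have := (std_L1_tendsto (fun t => η i t a / σ t a) (fun t => η j t a / σ t a)
      (L a) (hL i a) (hL j a)).const_mul (1 / Real.sqrt (2*π))
    simpa using this
  have hBt : Tendsto (fun t => M * ∑ a, D a t * 2 ^ d) atTop (nhds 0) := by
    have : Tendsto (fun t => ∑ a : Fin d, D a t * 2 ^ d) atTop (nhds 0) := by
      have := tendsto_finset_sum Finset.univ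
        (fun a (_ : a ∈ Finset.univ) => (hDt a).mul_const ((2:ℝ) ^ d))
      simpa using this
    simpa using this.const_mul M
  exact squeeze_zero_norm (fun t => by rw [Real.norm_eq_abs]; exact bound t) hBt
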